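/- arXiv:1511.00103 — 3 statements merged into one kernel-verified Lean document; each statement's English description precedes it below -/
import Mathlib

section
/- Consider the five-qubit state ρ^{(D_3^5)} = a |D_3^5⟩⟨D_3^5| + (1−a) I_5 / 32 with 0 ≤ a ≤ 1. If a > 5/13, then ρ^{(D_3^5)} is not 3-separable. -/
open scoped BigOperators

noncomputable section

namespace Qubits

/-- The outer product `|ψ⟩⟨ψ|` of an `N`-qubit state vector, as a matrix in the
computational basis (indexed by configurations `Fin N → Fin 2`). -/
def outer {N : ℕ} (ψ : (Fin N → Fin 2) → ℂ) :
    Matrix (Fin N → Fin 2) (Fin N → Fin 2) ℂ :=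
  Matrix.vecMulVec ψ (star ψ)

/-- A pure `N`-qubit state is `k`-separable if `{1,…,N}` can be partitioned into `k`
(pairwise disjoint, nonempty) parts — the fibers of a surjection `P : Fin N → Fin k` —
such that `ψ` factorizes as a product of `k` functions, the `l`-th of which depends
only on the qubits in part `l`. -/
def kSepPure {N : ℕ} (k : ℕ) (ψ : (Fin N → Fin 2) → ℂ) : Prop :=
  ∃ P : Fin N → Fin k, Function.Surjective P ∧
    ∃ f : Fin k → ((Fin N → Fin 2) → ℂ),
      (∀ l x y, (∀ i, P i = l → x i = y i) → f l x = f l y) ∧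
      ∀ x, ψ x = ∏ l, f l x

/-- An `N`-qubit density matrix is `k`-separable if it is a convex combination of
projectors onto `k`-separable pure (unit) states, possibly separable with respect
to different partitions. -/
def kSep {N : ℕ} (k : ℕ) (ρ : Matrix (Fin N → Fin 2) (Fin N → Fin 2) ℂ) : Prop :=
  ∃ (n : ℕ) (p : Fin n → ℝ) (ψ : Fin n → (Fin N → Fin 2) → ℂ),
    (∀ s, 0 ≤ p s) ∧ (∑ s, p s = 1) ∧
    (∀ s, ∑ x, Complex.normSq (ψ s x) = 1) ∧
    (∀ s, kSepPure k (ψ s)) ∧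
    ρ = ∑ s, (p s : ℂ) • outer (ψ s)

/-- The `N`-qubit Dicke state with `m` excitations,
`|D_m^N⟩ = C(N,m)^{-1/2} Σ_{|S| = m} |e_S⟩`, as a vector of computational-basis
coefficients. -/
def dicke (N m : ℕ) : (Fin N → Fin 2) → ℂ :=
  fun x => if (Finset.univ.filter fun i => x i = 1).card = m
    then (((Real.sqrt (N.choose m))⁻¹ : ℝ) : ℂ) else 0

end Qubits

def Complex.abs : AbsoluteValue ℂ ℝ := IsAbsoluteValue.toAbsoluteValue (‖·‖)

lemma Complex.abs_apply (z : ℂ) : Complex.abs z = ‖z‖ := rfl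

lemma Complex.abs_ofReal (r : ℝ) : Complex.abs (r : ℂ) = |r| := by
  rw [Complex.abs_apply, Complex.norm_real, Real.norm_eq_abs]

lemma Complex.abs_conj (z : ℂ) : Complex.abs ((starRingEnd ℂ) z) = Complex.abs z := by
  rw [Complex.abs_apply, Complex.abs_apply, Complex.norm_conj]

lemma Complex.normSq_eq_abs (z : ℂ) : Complex.normSq z = Complex.abs z ^ 2 := by
  rw [Complex.abs_apply, Complex.normSq_eq_norm_sq]

namespace DickeAux

open Finset

abbrev Cfg := Fin 5 → Fin 2

def wt (x : Cfg) : ℕ := (Finset.univ.filter fun i => x i = 1).card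

def W3 : Finset Cfg := Finset.univ.filter fun x => wt x = 3

def TT : Finset (Cfg × Fin 5 × Fin 5) :=
  Finset.univ.filter fun t => wt t.1 = 2 ∧ t.1 t.2.1 = 0 ∧ t.1 t.2.2 = 0 ∧ t.2.1 ≠ t.2.2

def Xof (t : Cfg × Fin 5 × Fin 5) : Cfg := Function.update t.1 t.2.1 1
def Yof (t : Cfg × Fin 5 × Fin 5) : Cfg := Function.update t.1 t.2.2 1
def Uof (t : Cfg × Fin 5 × Fin 5) : Cfg :=
  Function.update (Function.update t.1 t.2.1 1) t.2.2 1
def Vof (t : Cfg × Fin 5 × Fin 5) : Cfg := t.1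

def dR (x : Cfg) : ℝ := if wt x = 3 then (Real.sqrt 10)⁻¹ else 0

set_option maxRecDepth 10000 in
lemma wt_upd : ∀ (x : Cfg) (i : Fin 5), wt x = 2 → x i = 0 →
    wt (Function.update x i 1) = 3 := by decide

set_option maxRecDepth 10000 in
lemma wt_upd2 : ∀ (x : Cfg) (i j : Fin 5), wt x = 2 → x i = 0 → x j = 0 → i ≠ j →
    wt (Function.update (Function.update x i 1) j 1) = 4 := by decide

set_option maxRecDepth 10000 in
lemma card_TT : TT.card = 60 := by decide

set_option maxRecDepth 10000 in
lemma card_W3 : W3.card = 10 := by decide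

set_option maxRecDepth 10000 in
lemma pairbound1 : ∀ (P : Fin 5 → Fin 3) (X : Cfg), Function.Surjective P → wt X = 3 →
    (Finset.univ.filter fun q : Fin 5 × Fin 5 =>
      X q.1 = 1 ∧ X q.2 = 0 ∧ P q.1 = P q.2).card ≤ 2 := by decide

set_option maxRecDepth 10000 in
lemma pairbound2 : ∀ (P : Fin 5 → Fin 3) (X : Cfg), Function.Surjective P → wt X = 3 →
    (Finset.univ.filter fun q : Fin 5 × Fin 5 =>
      X q.1 = 0 ∧ X q.2 = 1 ∧ P q.1 = P q.2).card ≤ 2 := by decide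

lemma mem_TT {t : Cfg × Fin 5 × Fin 5} (ht : t ∈ TT) :
    wt t.1 = 2 ∧ t.1 t.2.1 = 0 ∧ t.1 t.2.2 = 0 ∧ t.2.1 ≠ t.2.2 := by
  simpa [TT] using ht

lemma wt_Xof {t : Cfg × Fin 5 × Fin 5} (ht : t ∈ TT) : wt (Xof t) = 3 := by
  obtain ⟨h1, h2, h3, h4⟩ := mem_TT ht
  exact wt_upd _ _ h1 h2

lemma wt_Yof {t : Cfg × Fin 5 × Fin 5} (ht : t ∈ TT) : wt (Yof t) = 3 := by
  obtain ⟨h1, h2, h3, h4⟩ := mem_TT ht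
  exact wt_upd _ _ h1 h3

lemma wt_Uof {t : Cfg × Fin 5 × Fin 5} (ht : t ∈ TT) : wt (Uof t) = 4 := by
  obtain ⟨h1, h2, h3, h4⟩ := mem_TT ht
  exact wt_upd2 _ _ _ h1 h2 h3 h4

lemma Xof_ne_Yof {t : Cfg × Fin 5 × Fin 5} (ht : t ∈ TT) : Xof t ≠ Yof t := by
  obtain ⟨h1, h2, h3, h4⟩ := mem_TT ht
  intro h
  have h5 := congrFun h t.2.1
  rw [Xof, Yof, Function.update_self, Function.update_of_ne h4, h2] at h5
  exact absurd h5 (by decide)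

lemma base_eq {t : Cfg × Fin 5 × Fin 5} (h2 : t.1 t.2.1 = 0) {X : Cfg}
    (hX : Function.update t.1 t.2.1 1 = X) : t.1 = Function.update X t.2.1 0 := by
  funext k
  by_cases hk : k = t.2.1
  · subst hk; rw [Function.update_self, h2]
  · rw [Function.update_of_ne hk, ← hX, Function.update_of_ne hk]

lemma base_eq' {t : Cfg × Fin 5 × Fin 5} (h3 : t.1 t.2.2 = 0) {X : Cfg}
    (hX : Function.update t.1 t.2.2 1 = X) : t.1 = Function.update X t.2.2 0 := by
  funext k
  by_cases hk : k = t.2.2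
  · subst hk; rw [Function.update_self, h3]
  · rw [Function.update_of_ne hk, ← hX, Function.update_of_ne hk]

variable {P : Fin 5 → Fin 3}

lemma groupX (hP : Function.Surjective P) (g : Cfg → ℝ) (hg : ∀ x, 0 ≤ g x) :
    ∑ t ∈ TT.filter (fun t => P t.2.1 = P t.2.2), g (Xof t) ≤ 2 * ∑ x ∈ W3, g x := by
  classical
  rw [Finset.sum_comp g Xof]
  have himg : (TT.filter (fun t => P t.2.1 = P t.2.2)).image Xof ⊆ W3 := by
    intro c hc
    obtain ⟨t, ht, rfl⟩ := Finset.mem_image.1 hc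
    have ht' : t ∈ TT := Finset.mem_of_mem_filter _ ht
    simp [W3, wt_Xof ht']
  calc ∑ c ∈ (TT.filter (fun t => P t.2.1 = P t.2.2)).image Xof,
        ((TT.filter (fun t => P t.2.1 = P t.2.2)).filter fun t => Xof t = c).card • g c
      ≤ ∑ c ∈ (TT.filter (fun t => P t.2.1 = P t.2.2)).image Xof, 2 * g c := by
        apply Finset.sum_le_sum
        intro c hc
        rw [nsmul_eq_mul]
        apply mul_le_mul_of_nonneg_right _ (hg c)
        have hc3 : wt c = 3 := by
          have := himg hc; simpa [W3] using this
        have hcard : ((TT.filter (fun t => P t.2.1 = P t.2.2)).filter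
            fun t => Xof t = c).card ≤ 2 := by
          refine le_trans (Finset.card_le_card_of_injOn (fun t => (t.2.1, t.2.2)) ?_ ?_)
            (pairbound1 P c hP hc3)
          · intro t ht
            rw [Finset.mem_coe, Finset.mem_filter] at ht
            obtain ⟨hts, hXb⟩ := ht
            rw [Finset.mem_filter] at hts
            obtain ⟨htT, hPt⟩ := hts
            obtain ⟨h1, h2, h3, h4⟩ := mem_TT htT
            rw [Finset.mem_coe, Finset.mem_filter]
            refine ⟨Finset.mem_univ _, ?_, ?_, hPt⟩
            · rw [← hXb, Xof, Function.update_self]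
            · rw [← hXb, Xof, Function.update_of_ne (Ne.symm h4), h3]
          · intro t ht t' ht' hq
            rw [Finset.mem_coe, Finset.mem_filter] at ht ht'
            obtain ⟨hts, hXb⟩ := ht
            obtain ⟨hts', hXb'⟩ := ht'
            have htT : t ∈ TT := Finset.mem_of_mem_filter _ hts
            have htT' : t' ∈ TT := Finset.mem_of_mem_filter _ hts'
            obtain ⟨_, h2, _, _⟩ := mem_TT htT
            obtain ⟨_, h2', _, _⟩ := mem_TT htT'
            have hpair1 : t.2.1 = t'.2.1 := congrArg Prod.fst hq
            have hpair2 : t.2.2 = t'.2.2 := congrArg Prod.snd hq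
            have hbase : t.1 = t'.1 := by
              rw [base_eq h2 hXb, base_eq h2' hXb', hpair1]
            exact Prod.ext hbase (Prod.ext hpair1 hpair2)
        exact_mod_cast Nat.cast_le.2 hcard
    _ ≤ 2 * ∑ x ∈ W3, g x := by
        rw [Finset.mul_sum]
        exact Finset.sum_le_sum_of_subset_of_nonneg himg
          (fun x _ _ => mul_nonneg (by norm_num) (hg x))

lemma groupY (hP : Function.Surjective P) (g : Cfg → ℝ) (hg : ∀ x, 0 ≤ g x) :
    ∑ t ∈ TT.filter (fun t => P t.2.1 = P t.2.2), g (Yof t) ≤ 2 * ∑ x ∈ W3, g x := by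
  classical
  rw [Finset.sum_comp g Yof]
  have himg : (TT.filter (fun t => P t.2.1 = P t.2.2)).image Yof ⊆ W3 := by
    intro c hc
    obtain ⟨t, ht, rfl⟩ := Finset.mem_image.1 hc
    have ht' : t ∈ TT := Finset.mem_of_mem_filter _ ht
    simp [W3, wt_Yof ht']
  calc ∑ c ∈ (TT.filter (fun t => P t.2.1 = P t.2.2)).image Yof,
        ((TT.filter (fun t => P t.2.1 = P t.2.2)).filter fun t => Yof t = c).card • g c
      ≤ ∑ c ∈ (TT.filter (fun t => P t.2.1 = P t.2.2)).image Yof, 2 * g c := by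
        apply Finset.sum_le_sum
        intro c hc
        rw [nsmul_eq_mul]
        apply mul_le_mul_of_nonneg_right _ (hg c)
        have hc3 : wt c = 3 := by
          have := himg hc; simpa [W3] using this
        have hcard : ((TT.filter (fun t => P t.2.1 = P t.2.2)).filter
            fun t => Yof t = c).card ≤ 2 := by
          refine le_trans (Finset.card_le_card_of_injOn (fun t => (t.2.1, t.2.2)) ?_ ?_)
            (pairbound2 P c hP hc3)
          · intro t ht
            rw [Finset.mem_coe, Finset.mem_filter] at ht
            obtain ⟨hts, hXb⟩ := ht
            rw [Finset.mem_filter] at hts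
            obtain ⟨htT, hPt⟩ := hts
            obtain ⟨h1, h2, h3, h4⟩ := mem_TT htT
            rw [Finset.mem_coe, Finset.mem_filter]
            refine ⟨Finset.mem_univ _, ?_, ?_, hPt⟩
            · rw [← hXb, Yof, Function.update_of_ne h4, h2]
            · rw [← hXb, Yof, Function.update_self]
          · intro t ht t' ht' hq
            rw [Finset.mem_coe, Finset.mem_filter] at ht ht'
            obtain ⟨hts, hXb⟩ := ht
            obtain ⟨hts', hXb'⟩ := ht'
            have htT : t ∈ TT := Finset.mem_of_mem_filter _ hts
            have htT' : t' ∈ TT := Finset.mem_of_mem_filter _ hts'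
            obtain ⟨_, _, h3, _⟩ := mem_TT htT
            obtain ⟨_, _, h3', _⟩ := mem_TT htT'
            have hpair1 : t.2.1 = t'.2.1 := congrArg Prod.fst hq
            have hpair2 : t.2.2 = t'.2.2 := congrArg Prod.snd hq
            have hbase : t.1 = t'.1 := by
              rw [base_eq' h3 hXb, base_eq' h3' hXb', hpair2]
            exact Prod.ext hbase (Prod.ext hpair1 hpair2)
        exact_mod_cast Nat.cast_le.2 hcard
    _ ≤ 2 * ∑ x ∈ W3, g x := by
        rw [Finset.mul_sum]
        exact Finset.sum_le_sum_of_subset_of_nonneg himg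
          (fun x _ _ => mul_nonneg (by norm_num) (hg x))

lemma good_identity (ψ : Cfg → ℂ) (f : Fin 3 → (Cfg → ℂ))
    (hloc : ∀ l x y, (∀ i, P i = l → x i = y i) → f l x = f l y)
    (hfac : ∀ x, ψ x = ∏ l, f l x)
    {t : Cfg × Fin 5 × Fin 5} (ht : t ∈ TT) (hgood : P t.2.1 ≠ P t.2.2) :
    ψ (Xof t) * ψ (Yof t) = ψ (Uof t) * ψ (Vof t) := by
  obtain ⟨h1, h2, h3, h4⟩ := mem_TT ht
  obtain ⟨S, i, j⟩ := t
  simp only at h1 h2 h3 h4 hgood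
  simp only [Xof, Yof, Uof, Vof]
  rw [hfac, hfac, hfac, hfac, ← Finset.prod_mul_distrib, ← Finset.prod_mul_distrib]
  apply Finset.prod_congr rfl
  intro l _
  by_cases hli : P i = l
  · have e1 : f l (Function.update S i 1) =
        f l (Function.update (Function.update S i 1) j 1) := by
      apply hloc
      intro k hk
      have hkj : k ≠ j := by rintro rfl; exact hgood (hli.trans hk.symm)
      rw [Function.update_of_ne hkj]
    have e2 : f l (Function.update S j 1) = f l S := by
      apply hloc
      intro k hk
      have hkj : k ≠ j := by rintro rfl; exact hgood (hli.trans hk.symm)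
      rw [Function.update_of_ne hkj]
    rw [e1, e2]
  · by_cases hlj : P j = l
    · have e1 : f l (Function.update S i 1) = f l S := by
        apply hloc
        intro k hk
        have hki : k ≠ i := by rintro rfl; exact hli hk
        rw [Function.update_of_ne hki]
      have e2 : f l (Function.update S j 1) =
          f l (Function.update (Function.update S i 1) j 1) := by
        apply hloc
        intro k hk
        by_cases hkj : k = j
        · subst hkj; rw [Function.update_self, Function.update_self]
        · have hki : k ≠ i := by rintro rfl; exact hli hk
          rw [Function.update_of_ne hkj, Function.update_of_ne hkj,
            Function.update_of_ne hki]
      rw [e1, e2]; ring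
    · have e1 : f l (Function.update S i 1) = f l S := by
        apply hloc; intro k hk
        have hki : k ≠ i := by rintro rfl; exact hli hk
        rw [Function.update_of_ne hki]
      have e2 : f l (Function.update S j 1) = f l S := by
        apply hloc; intro k hk
        have hkj : k ≠ j := by rintro rfl; exact hlj hk
        rw [Function.update_of_ne hkj]
      have e3 : f l (Function.update (Function.update S i 1) j 1) = f l S := by
        apply hloc; intro k hk
        have hki : k ≠ i := by rintro rfl; exact hli hk
        have hkj : k ≠ j := by rintro rfl; exact hlj hk
        rw [Function.update_of_ne hkj, Function.update_of_ne hki]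
      rw [e1, e2, e3]

open Qubits in
lemma core (ψ : Cfg → ℂ) (h : kSepPure 3 ψ) :
    ∑ t ∈ TT, Complex.abs (ψ (Xof t)) * Complex.abs (ψ (Yof t)) ≤
      (∑ t ∈ TT, Complex.abs (ψ (Uof t)) * Complex.abs (ψ (Vof t)))
        + 2 * ∑ x ∈ W3, Complex.abs (ψ x) ^ 2 := by
  classical
  obtain ⟨P, hP, f, hloc, hfac⟩ := h
  rw [← Finset.sum_filter_add_sum_filter_not TT (fun t => P t.2.1 = P t.2.2)]
  have hbad : ∑ t ∈ TT.filter (fun t => P t.2.1 = P t.2.2),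
      Complex.abs (ψ (Xof t)) * Complex.abs (ψ (Yof t)) ≤
      2 * ∑ x ∈ W3, Complex.abs (ψ x) ^ 2 := by
    have step1 : ∑ t ∈ TT.filter (fun t => P t.2.1 = P t.2.2),
        Complex.abs (ψ (Xof t)) * Complex.abs (ψ (Yof t)) ≤
        ∑ t ∈ TT.filter (fun t => P t.2.1 = P t.2.2),
          (Complex.abs (ψ (Xof t)) ^ 2 / 2 + Complex.abs (ψ (Yof t)) ^ 2 / 2) := by
      apply Finset.sum_le_sum
      intro t _
      nlinarith [sq_nonneg (Complex.abs (ψ (Xof t)) - Complex.abs (ψ (Yof t)))]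
    refine step1.trans ?_
    rw [Finset.sum_add_distrib]
    have hgx := groupX (P := P) hP (fun x => Complex.abs (ψ x) ^ 2) (fun x => sq_nonneg _)
    have hgy := groupY (P := P) hP (fun x => Complex.abs (ψ x) ^ 2) (fun x => sq_nonneg _)
    have e1 : ∑ t ∈ TT.filter (fun t => P t.2.1 = P t.2.2),
        Complex.abs (ψ (Xof t)) ^ 2 / 2 =
        (∑ t ∈ TT.filter (fun t => P t.2.1 = P t.2.2),
          Complex.abs (ψ (Xof t)) ^ 2) / 2 := by rw [Finset.sum_div]
    have e2 : ∑ t ∈ TT.filter (fun t => P t.2.1 = P t.2.2),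
        Complex.abs (ψ (Yof t)) ^ 2 / 2 =
        (∑ t ∈ TT.filter (fun t => P t.2.1 = P t.2.2),
          Complex.abs (ψ (Yof t)) ^ 2) / 2 := by rw [Finset.sum_div]
    rw [e1, e2]
    linarith
  have hgood : ∑ t ∈ TT.filter (fun t => ¬ P t.2.1 = P t.2.2),
      Complex.abs (ψ (Xof t)) * Complex.abs (ψ (Yof t)) ≤
      ∑ t ∈ TT, Complex.abs (ψ (Uof t)) * Complex.abs (ψ (Vof t)) := by
    have heq : ∀ t ∈ TT.filter (fun t => ¬ P t.2.1 = P t.2.2),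
        Complex.abs (ψ (Xof t)) * Complex.abs (ψ (Yof t)) =
        Complex.abs (ψ (Uof t)) * Complex.abs (ψ (Vof t)) := by
      intro t ht
      have htT : t ∈ TT := Finset.mem_of_mem_filter _ ht
      have hgood' : P t.2.1 ≠ P t.2.2 := by
        simpa using (Finset.mem_filter.1 ht).2
      rw [← map_mul, ← map_mul, good_identity (P := P) ψ f hloc hfac htT hgood']
    rw [Finset.sum_congr rfl heq]
    exact Finset.sum_le_sum_of_subset_of_nonneg (Finset.filter_subset _ _)
      (fun t _ _ => mul_nonneg (Complex.abs.nonneg _) (Complex.abs.nonneg _))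
  linarith

end DickeAux

open DickeAux Finset

open Qubits in
/-- If `a > 5/13` then `a |D_3^5⟩⟨D_3^5| + (1−a) I/32` is not 3-separable. -/
theorem dicke35_noise_not_threeSep
    (a : ℝ) (ha0 : 0 ≤ a) (ha1 : a ≤ 1) (ha : a > 5 / 13) :
    ¬ kSep 3 ((a : ℂ) • outer (dicke 5 3) +
        (((1 - a) / 32 : ℝ) : ℂ) • (1 : Matrix (Fin 5 → Fin 2) (Fin 5 → Fin 2) ℂ)) := by
  classical
  rintro ⟨n, p, ψ, hp0, hp1, hnorm, hpure, hρ⟩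
  set b : ℝ := (1 - a) / 32 with hbdef
  have hb : 0 ≤ b := by
    have h1a : (0:ℝ) ≤ 1 - a := by linarith
    positivity
  have hsqrt10 : Real.sqrt 10 * Real.sqrt 10 = 10 :=
    Real.mul_self_sqrt (by norm_num)
  have hdicke : ∀ x : Cfg, dicke 5 3 x = ((dR x : ℝ) : ℂ) := by
    intro x
    have hc2 : Nat.choose 5 3 = 10 := by decide
    simp only [dicke, dR, wt, hc2]
    split_ifs with h <;> simp [h]
  have hdR_sq : ∀ x : Cfg, wt x = 3 → dR x * dR x = 1/10 := by
    intro x hx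
    simp only [dR, if_pos hx]
    rw [← mul_inv, hsqrt10]
    norm_num
  have hdR_zero : ∀ x : Cfg, wt x ≠ 3 → dR x = 0 := by
    intro x hx; simp only [dR, if_neg hx]
  -- entrywise form of the density matrix equation
  have hent : ∀ x y : Cfg,
      (a : ℂ) * ((dR x : ℂ) * (dR y : ℂ)) + (b : ℂ) * (if x = y then 1 else 0)
        = ∑ s, (p s : ℂ) * (ψ s x * (starRingEnd ℂ) (ψ s y)) := by
    intro x y
    have h0 := congrFun (congrFun hρ x) y
    simp only [Matrix.add_apply, Matrix.smul_apply, Matrix.sum_apply, Matrix.one_apply,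
      outer, Matrix.vecMulVec_apply, Pi.star_apply, smul_eq_mul, Complex.star_def,
      hdicke, Complex.conj_ofReal] at h0
    linear_combination h0
  -- diagonal entries
  have hdiag : ∀ x : Cfg, a * (dR x * dR x) + b = ∑ s, p s * Complex.abs (ψ s x) ^ 2 := by
    intro x
    have h := hent x x
    rw [if_pos rfl, mul_one] at h
    have h2 : ((a * (dR x * dR x) + b : ℝ) : ℂ)
        = ((∑ s, p s * Complex.abs (ψ s x) ^ 2 : ℝ) : ℂ) := by
      push_cast
      rw [h]
      apply Finset.sum_congr rfl
      intro s _
      rw [Complex.mul_conj, Complex.normSq_eq_abs]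
      push_cast
      ring
    exact_mod_cast h2
  -- off-diagonal entries in the weight-3 sector
  have hoffd : ∀ x y : Cfg, x ≠ y → wt x = 3 → wt y = 3 →
      a / 10 ≤ ∑ s, p s * (Complex.abs (ψ s x) * Complex.abs (ψ s y)) := by
    intro x y hxy h3x h3y
    have h := hent x y
    rw [if_neg hxy, mul_zero, add_zero] at h
    have hdxy : dR x * dR y = 1/10 := by
      have hx : dR x = (Real.sqrt 10)⁻¹ := by simp only [dR, if_pos h3x]
      have hy : dR y = (Real.sqrt 10)⁻¹ := by simp only [dR, if_pos h3y]
      rw [hx, hy, ← mul_inv, hsqrt10]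
      norm_num
    have hlhs : (a : ℂ) * ((dR x : ℂ) * (dR y : ℂ)) = ((a / 10 : ℝ) : ℂ) := by
      have h1 : ((dR x : ℂ) * (dR y : ℂ)) = ((1/10 : ℝ) : ℂ) := by
        exact_mod_cast congrArg (fun r : ℝ => (r : ℂ)) hdxy
      rw [h1]
      push_cast
      ring
    rw [hlhs] at h
    have habs : a / 10 = Complex.abs (∑ s, (p s : ℂ) * (ψ s x * (starRingEnd ℂ) (ψ s y))) := by
      rw [← h, Complex.abs_ofReal, abs_of_nonneg (by positivity)]
    rw [habs]
    refine le_trans (Complex.abs.sum_le _ _) (le_of_eq ?_)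
    apply Finset.sum_congr rfl
    intro s _
    rw [map_mul, map_mul, Complex.abs_ofReal, Complex.abs_conj, abs_of_nonneg (hp0 s)]
  -- Cauchy–Schwarz bound on the U,V cross terms
  have hUV : ∀ t ∈ TT,
      ∑ s, p s * (Complex.abs (ψ s (Uof t)) * Complex.abs (ψ s (Vof t))) ≤ b := by
    intro t ht
    obtain ⟨h1, h2, h3, h4⟩ := mem_TT ht
    have hU : ∑ s, p s * Complex.abs (ψ s (Uof t)) ^ 2 = b := by
      have h := hdiag (Uof t)
      rw [hdR_zero _ (by rw [wt_Uof ht]; omega), mul_zero, mul_zero, zero_add] at h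
      exact h.symm
    have hV : ∑ s, p s * Complex.abs (ψ s (Vof t)) ^ 2 = b := by
      have h := hdiag (Vof t)
      rw [hdR_zero _ (by rw [Vof, h1]; omega), mul_zero, mul_zero, zero_add] at h
      exact h.symm
    have hcs := Finset.sum_mul_sq_le_sq_mul_sq Finset.univ
      (fun s => Real.sqrt (p s) * Complex.abs (ψ s (Uof t)))
      (fun s => Real.sqrt (p s) * Complex.abs (ψ s (Vof t)))
    have e1 : ∑ s, (Real.sqrt (p s) * Complex.abs (ψ s (Uof t))) *
        (Real.sqrt (p s) * Complex.abs (ψ s (Vof t))) =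
        ∑ s, p s * (Complex.abs (ψ s (Uof t)) * Complex.abs (ψ s (Vof t))) := by
      apply Finset.sum_congr rfl
      intro s _
      rw [show (Real.sqrt (p s) * Complex.abs (ψ s (Uof t))) *
          (Real.sqrt (p s) * Complex.abs (ψ s (Vof t))) =
          (Real.sqrt (p s) * Real.sqrt (p s)) *
            (Complex.abs (ψ s (Uof t)) * Complex.abs (ψ s (Vof t))) from by ring,
        Real.mul_self_sqrt (hp0 s)]
    have e2 : ∑ s, (Real.sqrt (p s) * Complex.abs (ψ s (Uof t))) ^ 2 =
        ∑ s, p s * Complex.abs (ψ s (Uof t)) ^ 2 := by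
      apply Finset.sum_congr rfl
      intro s _
      rw [mul_pow, Real.sq_sqrt (hp0 s)]
    have e3 : ∑ s, (Real.sqrt (p s) * Complex.abs (ψ s (Vof t))) ^ 2 =
        ∑ s, p s * Complex.abs (ψ s (Vof t)) ^ 2 := by
      apply Finset.sum_congr rfl
      intro s _
      rw [mul_pow, Real.sq_sqrt (hp0 s)]
    rw [e1, e2, e3, hU, hV] at hcs
    have hnn : 0 ≤ ∑ s, p s * (Complex.abs (ψ s (Uof t)) * Complex.abs (ψ s (Vof t))) := by
      apply Finset.sum_nonneg
      intro s _
      have := Complex.abs.nonneg (ψ s (Uof t))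
      have := Complex.abs.nonneg (ψ s (Vof t))
      have := hp0 s
      positivity
    nlinarith
  -- global chain
  have step1 : 6 * a ≤ ∑ t ∈ TT, ∑ s, p s *
      (Complex.abs (ψ s (Xof t)) * Complex.abs (ψ s (Yof t))) := by
    have h := Finset.sum_le_sum (fun t ht =>
      hoffd (Xof t) (Yof t) (Xof_ne_Yof ht) (wt_Xof ht) (wt_Yof ht))
    rw [Finset.sum_const, card_TT] at h
    have : (60 : ℕ) • (a / 10) = 6 * a := by
      rw [nsmul_eq_mul]; push_cast; ring
    linarith [this ▸ h]
  have swap1 : ∑ t ∈ TT, ∑ s, p s *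
      (Complex.abs (ψ s (Xof t)) * Complex.abs (ψ s (Yof t))) =
      ∑ s, p s * ∑ t ∈ TT, Complex.abs (ψ s (Xof t)) * Complex.abs (ψ s (Yof t)) := by
    rw [Finset.sum_comm]
    apply Finset.sum_congr rfl
    intro s _
    rw [Finset.mul_sum]
  have step2 : ∑ s, p s * ∑ t ∈ TT,
      Complex.abs (ψ s (Xof t)) * Complex.abs (ψ s (Yof t)) ≤
      ∑ s, p s * ((∑ t ∈ TT, Complex.abs (ψ s (Uof t)) * Complex.abs (ψ s (Vof t)))
        + 2 * ∑ x ∈ W3, Complex.abs (ψ s x) ^ 2) := by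
    apply Finset.sum_le_sum
    intro s _
    exact mul_le_mul_of_nonneg_left (core (ψ s) (hpure s)) (hp0 s)
  have expand : ∑ s, p s * ((∑ t ∈ TT, Complex.abs (ψ s (Uof t)) * Complex.abs (ψ s (Vof t)))
        + 2 * ∑ x ∈ W3, Complex.abs (ψ s x) ^ 2) =
      (∑ t ∈ TT, ∑ s, p s * (Complex.abs (ψ s (Uof t)) * Complex.abs (ψ s (Vof t))))
        + 2 * ∑ x ∈ W3, ∑ s, p s * Complex.abs (ψ s x) ^ 2 := by
    calc ∑ s, p s * ((∑ t ∈ TT, Complex.abs (ψ s (Uof t)) * Complex.abs (ψ s (Vof t)))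
            + 2 * ∑ x ∈ W3, Complex.abs (ψ s x) ^ 2)
        = ∑ s, ((∑ t ∈ TT, p s * (Complex.abs (ψ s (Uof t)) * Complex.abs (ψ s (Vof t))))
            + 2 * ∑ x ∈ W3, p s * Complex.abs (ψ s x) ^ 2) := by
          apply Finset.sum_congr rfl
          intro s _
          rw [mul_add, Finset.mul_sum, mul_left_comm, Finset.mul_sum]
      _ = (∑ s, ∑ t ∈ TT, p s * (Complex.abs (ψ s (Uof t)) * Complex.abs (ψ s (Vof t))))
            + ∑ s, 2 * ∑ x ∈ W3, p s * Complex.abs (ψ s x) ^ 2 := Finset.sum_add_distrib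
      _ = (∑ t ∈ TT, ∑ s, p s * (Complex.abs (ψ s (Uof t)) * Complex.abs (ψ s (Vof t))))
            + 2 * ∑ x ∈ W3, ∑ s, p s * Complex.abs (ψ s x) ^ 2 := by
          rw [Finset.sum_comm, ← Finset.mul_sum, Finset.sum_comm (s := Finset.univ)]
  have boundUV : ∑ t ∈ TT, ∑ s, p s *
      (Complex.abs (ψ s (Uof t)) * Complex.abs (ψ s (Vof t))) ≤ 60 * b := by
    have h := Finset.sum_le_sum hUV
    rw [Finset.sum_const, card_TT, nsmul_eq_mul] at h
    exact_mod_cast h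
  have boundW3 : ∑ x ∈ W3, ∑ s, p s * Complex.abs (ψ s x) ^ 2 = a + 10 * b := by
    have hx : ∀ x ∈ W3, ∑ s, p s * Complex.abs (ψ s x) ^ 2 = a / 10 + b := by
      intro x hx
      have h3 : wt x = 3 := by simpa [W3] using hx
      rw [← hdiag x, hdR_sq x h3]
      ring
    rw [Finset.sum_congr rfl hx, Finset.sum_const, card_W3, nsmul_eq_mul]
    push_cast
    ring
  have final : 6 * a ≤ 60 * b + 2 * (a + 10 * b) := by
    calc 6 * a ≤ ∑ t ∈ TT, ∑ s, p s *
        (Complex.abs (ψ s (Xof t)) * Complex.abs (ψ s (Yof t))) := step1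
      _ = ∑ s, p s * ∑ t ∈ TT,
          Complex.abs (ψ s (Xof t)) * Complex.abs (ψ s (Yof t)) := swap1
      _ ≤ ∑ s, p s * ((∑ t ∈ TT, Complex.abs (ψ s (Uof t)) * Complex.abs (ψ s (Vof t)))
          + 2 * ∑ x ∈ W3, Complex.abs (ψ s x) ^ 2) := step2
      _ = (∑ t ∈ TT, ∑ s, p s * (Complex.abs (ψ s (Uof t)) * Complex.abs (ψ s (Vof t))))
          + 2 * ∑ x ∈ W3, ∑ s, p s * Complex.abs (ψ s x) ^ 2 := expand
      _ ≤ 60 * b + 2 * (a + 10 * b) := by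
          rw [boundW3]
          linarith [boundUV]
  rw [hbdef] at final
  linarith
end
end

section
/- Let |φ⟩ = (1/2)(|0011⟩ + |0101⟩ + |0110⟩ + |1010⟩) ∈ (ℂ²)^{⊗4} and consider the four-qubit state ρ = a |φ⟩⟨φ| + (1−a) I_16 / 16 with 0 ≤ a ≤ 1, where I_16 is the identity operator on (ℂ²)^{⊗4}. If a > 7/19, then ρ is not 3-separable. -/
open scoped BigOperators

noncomputable section

private lemma sing_struct :
    ∀ P : Fin 4 → Fin 3, Function.Surjective P →
      ((∀ m, P m = P 2 → m = 2) ∧ (∀ m, P m = P 3 → m = 3)) ∨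
      ((∀ m, P m = P 0 → m = 0) ∧ (∀ m, P m = P 1 → m = 1)) ∨
      ((∀ m, P m = P 1 → m = 1) ∧ (∀ m, P m = P 2 → m = 2)) ∨
      ((∀ m, P m = P 0 → m = 0) ∧ (∀ m, P m = P 3 → m = 3)) ∨
      ((∀ m, P m = P 0 → m = 0) ∧ (∀ m, P m = P 2 → m = 2)) ∨
      ((∀ m, P m = P 1 → m = 1) ∧ (∀ m, P m = P 3 → m = 3)) := by
  decide

set_option maxHeartbeats 1000000 in
private lemma pure_bound (ψ : (Fin 4 → Fin 2) → ℂ) (h : Qubits.kSepPure 3 ψ) :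
    norm (ψ ![0,0,1,1]) * norm (ψ ![0,1,0,1])
      + norm (ψ ![0,0,1,1]) * norm (ψ ![0,1,1,0])
      + norm (ψ ![0,0,1,1]) * norm (ψ ![1,0,1,0])
      + norm (ψ ![0,1,0,1]) * norm (ψ ![0,1,1,0])
      + norm (ψ ![0,1,0,1]) * norm (ψ ![1,0,1,0])
      + norm (ψ ![0,1,1,0]) * norm (ψ ![1,0,1,0])
    ≤ 1/2 * norm (ψ ![0,0,1,1])^2 + 1/2 * norm (ψ ![0,1,0,1])^2
      + 1/2 * norm (ψ ![0,1,1,0])^2 + 1/2 * norm (ψ ![1,0,1,0])^2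
      + 1 * norm (ψ ![0,1,1,1])^2 + 1 * norm (ψ ![0,0,0,1])^2
      + 3/2 * norm (ψ ![0,0,1,0])^2 + 5/4 * norm (ψ ![0,1,0,0])^2
      + 1 * norm (ψ ![1,0,1,1])^2 + 1 * norm (ψ ![1,1,1,0])^2
      + 1/2 * norm (ψ ![1,1,0,1])^2 := by
  obtain ⟨P, hsurj, f, hloc, hfac⟩ := h
  set A : (Fin 4 → Fin 2) → ℝ := fun c => norm (ψ c) with hAdef
  have habs : ∀ (k : Fin 4), (∀ m, P m = P k → m = k) →
      ∀ x y z w : Fin 4 → Fin 2, z = Function.update x k (y k) →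
        w = Function.update y k (x k) → A x * A y = A z * A w := by
    intro k hk x y z w hz hw
    have key : ∀ l, f l z * f l w = f l x * f l y := by
      intro l
      by_cases hl : l = P k
      · subst hl
        have h1 : f (P k) z = f (P k) y := by
          refine hloc _ _ _ fun i hi => ?_
          rw [hk i hi, hz]; simp
        have h2 : f (P k) w = f (P k) x := by
          refine hloc _ _ _ fun i hi => ?_
          rw [hk i hi, hw]; simp
        rw [h1, h2]; ring
      · have h1 : f l z = f l x := by
          refine hloc _ _ _ fun i hi => ?_
          have : i ≠ k := fun h => hl (h ▸ hi).symm
          rw [hz, Function.update_of_ne this]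
        have h2 : f l w = f l y := by
          refine hloc _ _ _ fun i hi => ?_
          have : i ≠ k := fun h => hl (h ▸ hi).symm
          rw [hw, Function.update_of_ne this]
        rw [h1, h2]
    have hmul : ψ x * ψ y = ψ z * ψ w := by
      rw [hfac x, hfac y, hfac z, hfac w, ← Finset.prod_mul_distrib,
        ← Finset.prod_mul_distrib]
      exact (Finset.prod_congr rfl fun l _ => key l).symm
    have := congrArg norm hmul
    simpa [hAdef, norm_mul] using this
  have hstruct := sing_struct P hsurj
  rcases hstruct with ⟨hk, hl⟩ | ⟨hk, hl⟩ | ⟨hk, hl⟩ | ⟨hk, hl⟩ | ⟨hk, hl⟩ | ⟨hk, hl⟩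
  · -- singletons (2, 3)
    have b0 : A ![0,0,1,1] * A ![0,1,0,1] ≤ (1/1)*(A ![0,0,0,1])^2 + (1/4)*(A ![0,1,1,1])^2 := by
      rw [habs 2 hk ![0,0,1,1] ![0,1,0,1] ![0,0,0,1] ![0,1,1,1] (by decide) (by decide)]
      nlinarith [sq_nonneg (2*A ![0,0,0,1] - A ![0,1,1,1])]
    have b1 : A ![0,0,1,1] * A ![0,1,1,0] ≤ (1/1)*(A ![0,0,1,0])^2 + (1/4)*(A ![0,1,1,1])^2 := by
      rw [habs 3 hl ![0,0,1,1] ![0,1,1,0] ![0,0,1,0] ![0,1,1,1] (by decide) (by decide)]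
      nlinarith [sq_nonneg (2*A ![0,0,1,0] - A ![0,1,1,1])]
    have b2 : A ![0,0,1,1] * A ![1,0,1,0] ≤ (1/2)*(A ![0,0,1,0])^2 + (1/2)*(A ![1,0,1,1])^2 := by
      rw [habs 3 hl ![0,0,1,1] ![1,0,1,0] ![0,0,1,0] ![1,0,1,1] (by decide) (by decide)]
      nlinarith [sq_nonneg (A ![0,0,1,0] - A ![1,0,1,1])]
    have b3 : A ![0,1,0,1] * A ![0,1,1,0] ≤ (1/2)*(A ![0,1,1,1])^2 + (1/2)*(A ![0,1,0,0])^2 := by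
      rw [habs 2 hk ![0,1,0,1] ![0,1,1,0] ![0,1,1,1] ![0,1,0,0] (by decide) (by decide)]
      nlinarith [sq_nonneg (A ![0,1,1,1] - A ![0,1,0,0])]
    have b4 : A ![0,1,0,1] * A ![1,0,1,0] ≤ (1/2)*(A ![0,1,0,0])^2 + (1/2)*(A ![1,0,1,1])^2 := by
      rw [habs 3 hl ![0,1,0,1] ![1,0,1,0] ![0,1,0,0] ![1,0,1,1] (by decide) (by decide)]
      nlinarith [sq_nonneg (A ![0,1,0,0] - A ![1,0,1,1])]
    have b5 : A ![0,1,1,0] * A ![1,0,1,0] ≤ 1/2*(A ![0,1,1,0])^2 + 1/2*(A ![1,0,1,0])^2 := by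
      nlinarith [sq_nonneg (A ![0,1,1,0] - A ![1,0,1,0])]
    linarith [b0, b1, b2, b3, b4, b5, sq_nonneg (A ![0,0,1,1]), sq_nonneg (A ![0,1,0,1]), sq_nonneg (A ![0,1,1,0]), sq_nonneg (A ![1,0,1,0]), sq_nonneg (A ![0,1,1,1]), sq_nonneg (A ![0,0,0,1]), sq_nonneg (A ![0,0,1,0]), sq_nonneg (A ![0,1,0,0]), sq_nonneg (A ![1,0,1,1]), sq_nonneg (A ![1,1,1,0]), sq_nonneg (A ![1,1,0,1])]
  · -- singletons (0, 1)
    have b0 : A ![0,0,1,1] * A ![0,1,0,1] ≤ (1/2)*(A ![0,1,1,1])^2 + (1/2)*(A ![0,0,0,1])^2 := by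
      rw [habs 1 hl ![0,0,1,1] ![0,1,0,1] ![0,1,1,1] ![0,0,0,1] (by decide) (by decide)]
      nlinarith [sq_nonneg (A ![0,1,1,1] - A ![0,0,0,1])]
    have b1 : A ![0,0,1,1] * A ![0,1,1,0] ≤ (1/2)*(A ![0,1,1,1])^2 + (1/2)*(A ![0,0,1,0])^2 := by
      rw [habs 1 hl ![0,0,1,1] ![0,1,1,0] ![0,1,1,1] ![0,0,1,0] (by decide) (by decide)]
      nlinarith [sq_nonneg (A ![0,1,1,1] - A ![0,0,1,0])]
    have b2 : A ![0,0,1,1] * A ![1,0,1,0] ≤ (1/2)*(A ![1,0,1,1])^2 + (1/2)*(A ![0,0,1,0])^2 := by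
      rw [habs 0 hk ![0,0,1,1] ![1,0,1,0] ![1,0,1,1] ![0,0,1,0] (by decide) (by decide)]
      nlinarith [sq_nonneg (A ![1,0,1,1] - A ![0,0,1,0])]
    have b3 : A ![0,1,0,1] * A ![0,1,1,0] ≤ 1/2*(A ![0,1,0,1])^2 + 1/2*(A ![0,1,1,0])^2 := by
      nlinarith [sq_nonneg (A ![0,1,0,1] - A ![0,1,1,0])]
    have b4 : A ![0,1,0,1] * A ![1,0,1,0] ≤ (1/2)*(A ![0,0,0,1])^2 + (1/2)*(A ![1,1,1,0])^2 := by
      rw [habs 1 hl ![0,1,0,1] ![1,0,1,0] ![0,0,0,1] ![1,1,1,0] (by decide) (by decide)]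
      nlinarith [sq_nonneg (A ![0,0,0,1] - A ![1,1,1,0])]
    have b5 : A ![0,1,1,0] * A ![1,0,1,0] ≤ (1/2)*(A ![1,1,1,0])^2 + (1/2)*(A ![0,0,1,0])^2 := by
      rw [habs 0 hk ![0,1,1,0] ![1,0,1,0] ![1,1,1,0] ![0,0,1,0] (by decide) (by decide)]
      nlinarith [sq_nonneg (A ![1,1,1,0] - A ![0,0,1,0])]
    linarith [b0, b1, b2, b3, b4, b5, sq_nonneg (A ![0,0,1,1]), sq_nonneg (A ![0,1,0,1]), sq_nonneg (A ![0,1,1,0]), sq_nonneg (A ![1,0,1,0]), sq_nonneg (A ![0,1,1,1]), sq_nonneg (A ![0,0,0,1]), sq_nonneg (A ![0,0,1,0]), sq_nonneg (A ![0,1,0,0]), sq_nonneg (A ![1,0,1,1]), sq_nonneg (A ![1,1,1,0]), sq_nonneg (A ![1,1,0,1])]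
  · -- singletons (1, 2)
    have b0 : A ![0,0,1,1] * A ![0,1,0,1] ≤ (1/2)*(A ![0,1,1,1])^2 + (1/2)*(A ![0,0,0,1])^2 := by
      rw [habs 1 hk ![0,0,1,1] ![0,1,0,1] ![0,1,1,1] ![0,0,0,1] (by decide) (by decide)]
      nlinarith [sq_nonneg (A ![0,1,1,1] - A ![0,0,0,1])]
    have b1 : A ![0,0,1,1] * A ![0,1,1,0] ≤ (1/4)*(A ![0,1,1,1])^2 + (1/1)*(A ![0,0,1,0])^2 := by
      rw [habs 1 hk ![0,0,1,1] ![0,1,1,0] ![0,1,1,1] ![0,0,1,0] (by decide) (by decide)]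
      nlinarith [sq_nonneg (A ![0,1,1,1] - 2*A ![0,0,1,0])]
    have b2 : A ![0,0,1,1] * A ![1,0,1,0] ≤ 1/2*(A ![0,0,1,1])^2 + 1/2*(A ![1,0,1,0])^2 := by
      nlinarith [sq_nonneg (A ![0,0,1,1] - A ![1,0,1,0])]
    have b3 : A ![0,1,0,1] * A ![0,1,1,0] ≤ (1/4)*(A ![0,1,1,1])^2 + (1/1)*(A ![0,1,0,0])^2 := by
      rw [habs 2 hl ![0,1,0,1] ![0,1,1,0] ![0,1,1,1] ![0,1,0,0] (by decide) (by decide)]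
      nlinarith [sq_nonneg (A ![0,1,1,1] - 2*A ![0,1,0,0])]
    have b4 : A ![0,1,0,1] * A ![1,0,1,0] ≤ (1/2)*(A ![0,0,0,1])^2 + (1/2)*(A ![1,1,1,0])^2 := by
      rw [habs 1 hk ![0,1,0,1] ![1,0,1,0] ![0,0,0,1] ![1,1,1,0] (by decide) (by decide)]
      nlinarith [sq_nonneg (A ![0,0,0,1] - A ![1,1,1,0])]
    have b5 : A ![0,1,1,0] * A ![1,0,1,0] ≤ (1/2)*(A ![0,0,1,0])^2 + (1/2)*(A ![1,1,1,0])^2 := by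
      rw [habs 1 hk ![0,1,1,0] ![1,0,1,0] ![0,0,1,0] ![1,1,1,0] (by decide) (by decide)]
      nlinarith [sq_nonneg (A ![0,0,1,0] - A ![1,1,1,0])]
    linarith [b0, b1, b2, b3, b4, b5, sq_nonneg (A ![0,0,1,1]), sq_nonneg (A ![0,1,0,1]), sq_nonneg (A ![0,1,1,0]), sq_nonneg (A ![1,0,1,0]), sq_nonneg (A ![0,1,1,1]), sq_nonneg (A ![0,0,0,1]), sq_nonneg (A ![0,0,1,0]), sq_nonneg (A ![0,1,0,0]), sq_nonneg (A ![1,0,1,1]), sq_nonneg (A ![1,1,1,0]), sq_nonneg (A ![1,1,0,1])]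
  · -- singletons (0, 3)
    have b0 : A ![0,0,1,1] * A ![0,1,0,1] ≤ 1/2*(A ![0,0,1,1])^2 + 1/2*(A ![0,1,0,1])^2 := by
      nlinarith [sq_nonneg (A ![0,0,1,1] - A ![0,1,0,1])]
    have b1 : A ![0,0,1,1] * A ![0,1,1,0] ≤ (1/2)*(A ![0,0,1,0])^2 + (1/2)*(A ![0,1,1,1])^2 := by
      rw [habs 3 hl ![0,0,1,1] ![0,1,1,0] ![0,0,1,0] ![0,1,1,1] (by decide) (by decide)]
      nlinarith [sq_nonneg (A ![0,0,1,0] - A ![0,1,1,1])]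
    have b2 : A ![0,0,1,1] * A ![1,0,1,0] ≤ (1/2)*(A ![0,0,1,0])^2 + (1/2)*(A ![1,0,1,1])^2 := by
      rw [habs 3 hl ![0,0,1,1] ![1,0,1,0] ![0,0,1,0] ![1,0,1,1] (by decide) (by decide)]
      nlinarith [sq_nonneg (A ![0,0,1,0] - A ![1,0,1,1])]
    have b3 : A ![0,1,0,1] * A ![0,1,1,0] ≤ (1/2)*(A ![0,1,0,0])^2 + (1/2)*(A ![0,1,1,1])^2 := by
      rw [habs 3 hl ![0,1,0,1] ![0,1,1,0] ![0,1,0,0] ![0,1,1,1] (by decide) (by decide)]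
      nlinarith [sq_nonneg (A ![0,1,0,0] - A ![0,1,1,1])]
    have b4 : A ![0,1,0,1] * A ![1,0,1,0] ≤ (1/2)*(A ![0,1,0,0])^2 + (1/2)*(A ![1,0,1,1])^2 := by
      rw [habs 3 hl ![0,1,0,1] ![1,0,1,0] ![0,1,0,0] ![1,0,1,1] (by decide) (by decide)]
      nlinarith [sq_nonneg (A ![0,1,0,0] - A ![1,0,1,1])]
    have b5 : A ![0,1,1,0] * A ![1,0,1,0] ≤ (1/2)*(A ![1,1,1,0])^2 + (1/2)*(A ![0,0,1,0])^2 := by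
      rw [habs 0 hk ![0,1,1,0] ![1,0,1,0] ![1,1,1,0] ![0,0,1,0] (by decide) (by decide)]
      nlinarith [sq_nonneg (A ![1,1,1,0] - A ![0,0,1,0])]
    linarith [b0, b1, b2, b3, b4, b5, sq_nonneg (A ![0,0,1,1]), sq_nonneg (A ![0,1,0,1]), sq_nonneg (A ![0,1,1,0]), sq_nonneg (A ![1,0,1,0]), sq_nonneg (A ![0,1,1,1]), sq_nonneg (A ![0,0,0,1]), sq_nonneg (A ![0,0,1,0]), sq_nonneg (A ![0,1,0,0]), sq_nonneg (A ![1,0,1,1]), sq_nonneg (A ![1,1,1,0]), sq_nonneg (A ![1,1,0,1])]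
  · -- singletons (0, 2)
    have b0 : A ![0,0,1,1] * A ![0,1,0,1] ≤ (1/2)*(A ![0,0,0,1])^2 + (1/2)*(A ![0,1,1,1])^2 := by
      rw [habs 2 hl ![0,0,1,1] ![0,1,0,1] ![0,0,0,1] ![0,1,1,1] (by decide) (by decide)]
      nlinarith [sq_nonneg (A ![0,0,0,1] - A ![0,1,1,1])]
    have b1 : A ![0,0,1,1] * A ![0,1,1,0] ≤ 1/2*(A ![0,0,1,1])^2 + 1/2*(A ![0,1,1,0])^2 := by
      nlinarith [sq_nonneg (A ![0,0,1,1] - A ![0,1,1,0])]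
    have b2 : A ![0,0,1,1] * A ![1,0,1,0] ≤ (1/2)*(A ![1,0,1,1])^2 + (1/2)*(A ![0,0,1,0])^2 := by
      rw [habs 0 hk ![0,0,1,1] ![1,0,1,0] ![1,0,1,1] ![0,0,1,0] (by decide) (by decide)]
      nlinarith [sq_nonneg (A ![1,0,1,1] - A ![0,0,1,0])]
    have b3 : A ![0,1,0,1] * A ![0,1,1,0] ≤ (1/2)*(A ![0,1,1,1])^2 + (1/2)*(A ![0,1,0,0])^2 := by
      rw [habs 2 hl ![0,1,0,1] ![0,1,1,0] ![0,1,1,1] ![0,1,0,0] (by decide) (by decide)]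
      nlinarith [sq_nonneg (A ![0,1,1,1] - A ![0,1,0,0])]
    have b4 : A ![0,1,0,1] * A ![1,0,1,0] ≤ (1/2)*(A ![1,1,0,1])^2 + (1/2)*(A ![0,0,1,0])^2 := by
      rw [habs 0 hk ![0,1,0,1] ![1,0,1,0] ![1,1,0,1] ![0,0,1,0] (by decide) (by decide)]
      nlinarith [sq_nonneg (A ![1,1,0,1] - A ![0,0,1,0])]
    have b5 : A ![0,1,1,0] * A ![1,0,1,0] ≤ (1/2)*(A ![1,1,1,0])^2 + (1/2)*(A ![0,0,1,0])^2 := by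
      rw [habs 0 hk ![0,1,1,0] ![1,0,1,0] ![1,1,1,0] ![0,0,1,0] (by decide) (by decide)]
      nlinarith [sq_nonneg (A ![1,1,1,0] - A ![0,0,1,0])]
    linarith [b0, b1, b2, b3, b4, b5, sq_nonneg (A ![0,0,1,1]), sq_nonneg (A ![0,1,0,1]), sq_nonneg (A ![0,1,1,0]), sq_nonneg (A ![1,0,1,0]), sq_nonneg (A ![0,1,1,1]), sq_nonneg (A ![0,0,0,1]), sq_nonneg (A ![0,0,1,0]), sq_nonneg (A ![0,1,0,0]), sq_nonneg (A ![1,0,1,1]), sq_nonneg (A ![1,1,1,0]), sq_nonneg (A ![1,1,0,1])]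
  · -- singletons (1, 3)
    have b0 : A ![0,0,1,1] * A ![0,1,0,1] ≤ (1/3)*(A ![0,1,1,1])^2 + (3/4)*(A ![0,0,0,1])^2 := by
      rw [habs 1 hk ![0,0,1,1] ![0,1,0,1] ![0,1,1,1] ![0,0,0,1] (by decide) (by decide)]
      nlinarith [sq_nonneg (2*A ![0,1,1,1] - 3*A ![0,0,0,1])]
    have b1 : A ![0,0,1,1] * A ![0,1,1,0] ≤ (1/3)*(A ![0,1,1,1])^2 + (3/4)*(A ![0,0,1,0])^2 := by
      rw [habs 1 hk ![0,0,1,1] ![0,1,1,0] ![0,1,1,1] ![0,0,1,0] (by decide) (by decide)]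
      nlinarith [sq_nonneg (2*A ![0,1,1,1] - 3*A ![0,0,1,0])]
    have b2 : A ![0,0,1,1] * A ![1,0,1,0] ≤ (1/2)*(A ![0,0,1,0])^2 + (1/2)*(A ![1,0,1,1])^2 := by
      rw [habs 3 hl ![0,0,1,1] ![1,0,1,0] ![0,0,1,0] ![1,0,1,1] (by decide) (by decide)]
      nlinarith [sq_nonneg (A ![0,0,1,0] - A ![1,0,1,1])]
    have b3 : A ![0,1,0,1] * A ![0,1,1,0] ≤ (3/4)*(A ![0,1,0,0])^2 + (1/3)*(A ![0,1,1,1])^2 := by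
      rw [habs 3 hl ![0,1,0,1] ![0,1,1,0] ![0,1,0,0] ![0,1,1,1] (by decide) (by decide)]
      nlinarith [sq_nonneg (3*A ![0,1,0,0] - 2*A ![0,1,1,1])]
    have b4 : A ![0,1,0,1] * A ![1,0,1,0] ≤ (1/2)*(A ![0,1,0,0])^2 + (1/2)*(A ![1,0,1,1])^2 := by
      rw [habs 3 hl ![0,1,0,1] ![1,0,1,0] ![0,1,0,0] ![1,0,1,1] (by decide) (by decide)]
      nlinarith [sq_nonneg (A ![0,1,0,0] - A ![1,0,1,1])]
    have b5 : A ![0,1,1,0] * A ![1,0,1,0] ≤ (1/4)*(A ![0,0,1,0])^2 + (1/1)*(A ![1,1,1,0])^2 := by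
      rw [habs 1 hk ![0,1,1,0] ![1,0,1,0] ![0,0,1,0] ![1,1,1,0] (by decide) (by decide)]
      nlinarith [sq_nonneg (A ![0,0,1,0] - 2*A ![1,1,1,0])]
    linarith [b0, b1, b2, b3, b4, b5, sq_nonneg (A ![0,0,1,1]), sq_nonneg (A ![0,1,0,1]), sq_nonneg (A ![0,1,1,0]), sq_nonneg (A ![1,0,1,0]), sq_nonneg (A ![0,1,1,1]), sq_nonneg (A ![0,0,0,1]), sq_nonneg (A ![0,0,1,0]), sq_nonneg (A ![0,1,0,0]), sq_nonneg (A ![1,0,1,1]), sq_nonneg (A ![1,1,1,0]), sq_nonneg (A ![1,1,0,1])]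

open Qubits in
/-- For `|φ⟩ = ½(|0011⟩+|0101⟩+|0110⟩+|1010⟩)`: if `a > 7/19` then
`a |φ⟩⟨φ| + (1−a) I/16` is not 3-separable. -/
theorem fourQubit_chi_noise_not_threeSep
    (φ : (Fin 4 → Fin 2) → ℂ)
    (hφ : φ = fun x => if x = ![0, 0, 1, 1] ∨ x = ![0, 1, 0, 1] ∨
        x = ![0, 1, 1, 0] ∨ x = ![1, 0, 1, 0] then (1 / 2 : ℂ) else 0)
    (a : ℝ) (ha0 : 0 ≤ a) (ha1 : a ≤ 1) (ha : a > 7 / 19) :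
    ¬ kSep 3 ((a : ℂ) • outer φ +
        (((1 - a) / 16 : ℝ) : ℂ) • (1 : Matrix (Fin 4 → Fin 2) (Fin 4 → Fin 2) ℂ)) := by
  intro hsep
  obtain ⟨n, p, ψ, hp0, hp1, hnorm, hpure, hρ⟩ := hsep
  have hent : ∀ x y : Fin 4 → Fin 2,
      (a : ℂ) * (φ x * star (φ y)) +
        (((1 - a) / 16 : ℝ) : ℂ) * (if x = y then 1 else 0)
        = ∑ s, (p s : ℂ) * (ψ s x * star (ψ s y)) := by
    intro x y
    have h0 := congrFun (congrFun hρ x) y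
    simpa [Qubits.outer, Matrix.add_apply, Matrix.smul_apply, Matrix.one_apply,
      Matrix.sum_apply, Matrix.vecMulVec_apply, smul_eq_mul, Pi.star_apply] using h0
  -- values of φ
  have hφA : φ ![0,0,1,1] = 1/2 := by rw [hφ]; exact if_pos (Or.inl rfl)
  have hφB : φ ![0,1,0,1] = 1/2 := by rw [hφ]; exact if_pos (Or.inr (Or.inl rfl))
  have hφC : φ ![0,1,1,0] = 1/2 := by rw [hφ]; exact if_pos (Or.inr (Or.inr (Or.inl rfl)))
  have hφD : φ ![1,0,1,0] = 1/2 := by rw [hφ]; exact if_pos (Or.inr (Or.inr (Or.inr rfl)))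
  -- off-diagonal entries give lower bounds
  have key : ∀ x y : Fin 4 → Fin 2, x ≠ y → φ x = 1/2 → φ y = 1/2 →
      a / 4 ≤ ∑ s, p s * (norm (ψ s x) * norm (ψ s y)) := by
    intro x y hxy hx hy
    have h := hent x y
    rw [if_neg hxy, hx, hy, mul_zero, add_zero] at h
    have hs : star (1/2 : ℂ) = 1/2 := by norm_num
    rw [hs] at h
    have h2 : ((a/4 : ℝ) : ℂ) = ∑ s, (p s : ℂ) * (ψ s x * star (ψ s y)) := by
      rw [← h]; push_cast; ring
    calc a/4 = norm ((a/4 : ℝ) : ℂ) := by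
            rw [Complex.norm_real, Real.norm_eq_abs, abs_of_nonneg (by linarith)]
      _ = norm (∑ s, (p s : ℂ) * (ψ s x * star (ψ s y))) := by rw [h2]
      _ ≤ ∑ s, norm ((p s : ℂ) * (ψ s x * star (ψ s y))) :=
            norm_sum_le _ _
      _ = ∑ s, p s * (norm (ψ s x) * norm (ψ s y)) :=
            Finset.sum_congr rfl fun s _ => by
              rw [norm_mul, norm_mul, Complex.norm_real, Real.norm_eq_abs, abs_of_nonneg (hp0 s),
                Complex.star_def, Complex.norm_conj]
  -- diagonal entries
  have keyd : ∀ c : Fin 4 → Fin 2,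
      (∑ s, p s * (norm (ψ s c))^2) = a * (norm (φ c))^2 + (1-a)/16 := by
    intro c
    have h := hent c c
    rw [if_pos rfl] at h
    simp only [Complex.star_def, Complex.mul_conj, mul_one, ← Complex.ofReal_mul,
      ← Complex.ofReal_sum, ← Complex.ofReal_add, Complex.ofReal_inj] at h
    simp only [← Complex.sq_norm] at h
    exact h.symm
  have k1 := key ![0,0,1,1] ![0,1,0,1] (by decide) hφA hφB
  have k2 := key ![0,0,1,1] ![0,1,1,0] (by decide) hφA hφC
  have k3 := key ![0,0,1,1] ![1,0,1,0] (by decide) hφA hφD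
  have k4 := key ![0,1,0,1] ![0,1,1,0] (by decide) hφB hφC
  have k5 := key ![0,1,0,1] ![1,0,1,0] (by decide) hφB hφD
  have k6 := key ![0,1,1,0] ![1,0,1,0] (by decide) hφC hφD
  -- diagonal values
  have hsq : (norm (1/2 : ℂ))^2 = 1/4 := by
    rw [show (1/2:ℂ) = ((1/2:ℝ):ℂ) by norm_num, Complex.norm_real]; norm_num
  have hsq0 : (norm (0 : ℂ))^2 = 0 := by simp
  have dA := keyd ![0,0,1,1]; rw [hφA] at dA; rw [hsq] at dA
  have dB := keyd ![0,1,0,1]; rw [hφB] at dB; rw [hsq] at dB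
  have dC := keyd ![0,1,1,0]; rw [hφC] at dC; rw [hsq] at dC
  have dD := keyd ![1,0,1,0]; rw [hφD] at dD; rw [hsq] at dD
  have hφ1 : φ ![0,1,1,1] = 0 := by rw [hφ]; exact if_neg (by decide)
  have hφ2 : φ ![0,0,0,1] = 0 := by rw [hφ]; exact if_neg (by decide)
  have hφ3 : φ ![0,0,1,0] = 0 := by rw [hφ]; exact if_neg (by decide)
  have hφ4 : φ ![0,1,0,0] = 0 := by rw [hφ]; exact if_neg (by decide)
  have hφ5 : φ ![1,0,1,1] = 0 := by rw [hφ]; exact if_neg (by decide)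
  have hφ6 : φ ![1,1,1,0] = 0 := by rw [hφ]; exact if_neg (by decide)
  have hφ7 : φ ![1,1,0,1] = 0 := by rw [hφ]; exact if_neg (by decide)
  have d1 := keyd ![0,1,1,1]; rw [hφ1] at d1; rw [hsq0] at d1
  have d2 := keyd ![0,0,0,1]; rw [hφ2] at d2; rw [hsq0] at d2
  have d3 := keyd ![0,0,1,0]; rw [hφ3] at d3; rw [hsq0] at d3
  have d4 := keyd ![0,1,0,0]; rw [hφ4] at d4; rw [hsq0] at d4
  have d5 := keyd ![1,0,1,1]; rw [hφ5] at d5; rw [hsq0] at d5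
  have d6 := keyd ![1,1,1,0]; rw [hφ6] at d6; rw [hsq0] at d6
  have d7 := keyd ![1,1,0,1]; rw [hφ7] at d7; rw [hsq0] at d7
  -- sum the pure-state bounds
  have main : ∑ s, p s *
        (norm (ψ s ![0,0,1,1]) * norm (ψ s ![0,1,0,1])
          + norm (ψ s ![0,0,1,1]) * norm (ψ s ![0,1,1,0])
          + norm (ψ s ![0,0,1,1]) * norm (ψ s ![1,0,1,0])
          + norm (ψ s ![0,1,0,1]) * norm (ψ s ![0,1,1,0])
          + norm (ψ s ![0,1,0,1]) * norm (ψ s ![1,0,1,0])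
          + norm (ψ s ![0,1,1,0]) * norm (ψ s ![1,0,1,0]))
      ≤ ∑ s, p s *
        (1/2 * norm (ψ s ![0,0,1,1])^2 + 1/2 * norm (ψ s ![0,1,0,1])^2
          + 1/2 * norm (ψ s ![0,1,1,0])^2 + 1/2 * norm (ψ s ![1,0,1,0])^2
          + 1 * norm (ψ s ![0,1,1,1])^2 + 1 * norm (ψ s ![0,0,0,1])^2
          + 3/2 * norm (ψ s ![0,0,1,0])^2 + 5/4 * norm (ψ s ![0,1,0,0])^2
          + 1 * norm (ψ s ![1,0,1,1])^2 + 1 * norm (ψ s ![1,1,1,0])^2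
          + 1/2 * norm (ψ s ![1,1,0,1])^2) :=
    Finset.sum_le_sum fun s _ =>
      mul_le_mul_of_nonneg_left (pure_bound (ψ s) (hpure s)) (hp0 s)
  have lhs_eq : ∑ s, p s *
        (norm (ψ s ![0,0,1,1]) * norm (ψ s ![0,1,0,1])
          + norm (ψ s ![0,0,1,1]) * norm (ψ s ![0,1,1,0])
          + norm (ψ s ![0,0,1,1]) * norm (ψ s ![1,0,1,0])
          + norm (ψ s ![0,1,0,1]) * norm (ψ s ![0,1,1,0])
          + norm (ψ s ![0,1,0,1]) * norm (ψ s ![1,0,1,0])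
          + norm (ψ s ![0,1,1,0]) * norm (ψ s ![1,0,1,0]))
      = (∑ s, p s * (norm (ψ s ![0,0,1,1]) * norm (ψ s ![0,1,0,1])))
        + (∑ s, p s * (norm (ψ s ![0,0,1,1]) * norm (ψ s ![0,1,1,0])))
        + (∑ s, p s * (norm (ψ s ![0,0,1,1]) * norm (ψ s ![1,0,1,0])))
        + (∑ s, p s * (norm (ψ s ![0,1,0,1]) * norm (ψ s ![0,1,1,0])))
        + (∑ s, p s * (norm (ψ s ![0,1,0,1]) * norm (ψ s ![1,0,1,0])))
        + (∑ s, p s * (norm (ψ s ![0,1,1,0]) * norm (ψ s ![1,0,1,0]))) := by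
    simp only [mul_add, Finset.sum_add_distrib]
  have rhs_eq : ∑ s, p s *
        (1/2 * norm (ψ s ![0,0,1,1])^2 + 1/2 * norm (ψ s ![0,1,0,1])^2
          + 1/2 * norm (ψ s ![0,1,1,0])^2 + 1/2 * norm (ψ s ![1,0,1,0])^2
          + 1 * norm (ψ s ![0,1,1,1])^2 + 1 * norm (ψ s ![0,0,0,1])^2
          + 3/2 * norm (ψ s ![0,0,1,0])^2 + 5/4 * norm (ψ s ![0,1,0,0])^2
          + 1 * norm (ψ s ![1,0,1,1])^2 + 1 * norm (ψ s ![1,1,1,0])^2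
          + 1/2 * norm (ψ s ![1,1,0,1])^2)
      = 1/2 * (∑ s, p s * norm (ψ s ![0,0,1,1])^2)
        + 1/2 * (∑ s, p s * norm (ψ s ![0,1,0,1])^2)
        + 1/2 * (∑ s, p s * norm (ψ s ![0,1,1,0])^2)
        + 1/2 * (∑ s, p s * norm (ψ s ![1,0,1,0])^2)
        + 1 * (∑ s, p s * norm (ψ s ![0,1,1,1])^2)
        + 1 * (∑ s, p s * norm (ψ s ![0,0,0,1])^2)
        + 3/2 * (∑ s, p s * norm (ψ s ![0,0,1,0])^2)
        + 5/4 * (∑ s, p s * norm (ψ s ![0,1,0,0])^2)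
        + 1 * (∑ s, p s * norm (ψ s ![1,0,1,1])^2)
        + 1 * (∑ s, p s * norm (ψ s ![1,1,1,0])^2)
        + 1/2 * (∑ s, p s * norm (ψ s ![1,1,0,1])^2) := by
    rw [Finset.sum_congr rfl (fun s _ => show _ = 1/2 * (p s * norm (ψ s ![0,0,1,1])^2)
        + 1/2 * (p s * norm (ψ s ![0,1,0,1])^2)
        + 1/2 * (p s * norm (ψ s ![0,1,1,0])^2)
        + 1/2 * (p s * norm (ψ s ![1,0,1,0])^2)
        + 1 * (p s * norm (ψ s ![0,1,1,1])^2)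
        + 1 * (p s * norm (ψ s ![0,0,0,1])^2)
        + 3/2 * (p s * norm (ψ s ![0,0,1,0])^2)
        + 5/4 * (p s * norm (ψ s ![0,1,0,0])^2)
        + 1 * (p s * norm (ψ s ![1,0,1,1])^2)
        + 1 * (p s * norm (ψ s ![1,1,1,0])^2)
        + 1/2 * (p s * norm (ψ s ![1,1,0,1])^2) from by ring)]
    simp only [Finset.sum_add_distrib, ← Finset.mul_sum]
  rw [lhs_eq, rhs_eq] at main
  rw [dA, dB, dC, dD, d1, d2, d3, d4, d5, d6, d7] at main
  linarith [k1, k2, k3, k4, k5, k6, main]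
end
end

section
/- Let |φ⟩ = (1/2)(|0011⟩ + |0101⟩ + |0110⟩ + |1010⟩) ∈ (ℂ²)^{⊗4} and consider the four-qubit state ρ = a |φ⟩⟨φ| + (1−a) I_16 / 16 with 0 ≤ a ≤ 1, where I_16 is the identity operator on (ℂ²)^{⊗4}. If a > 1/5, then ρ is not fully separable (not 4-separable). -/
open scoped BigOperators

noncomputable section

open Qubits in
lemma key_swap (ψ : (Fin 4 → Fin 2) → ℂ) (h : kSepPure 4 ψ) :
    ψ ![0,0,1,1] * ψ ![0,1,0,1] = ψ ![0,0,0,1] * ψ ![0,1,1,1] := by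
  obtain ⟨P, hP, f, hdep, hprod⟩ := h
  have hPinj : Function.Injective P := Finite.injective_iff_surjective.mpr hP
  rw [hprod, hprod, hprod, hprod, ← Finset.prod_mul_distrib, ← Finset.prod_mul_distrib]
  apply Finset.prod_congr rfl
  intro l _
  obtain ⟨i, hi⟩ := hP l
  have dep : ∀ u v : Fin 4 → Fin 2, u i = v i → f l u = f l v := by
    intro u v huv
    apply hdep
    intro j hj
    have : j = i := hPinj (hj.trans hi.symm)
    rwa [this]
  fin_cases i
  · rw [dep ![0,0,0,1] ![0,0,1,1] (by decide), dep ![0,1,1,1] ![0,1,0,1] (by decide)]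
  · rw [dep ![0,0,0,1] ![0,0,1,1] (by decide), dep ![0,1,1,1] ![0,1,0,1] (by decide)]
  · rw [dep ![0,0,0,1] ![0,1,0,1] (by decide), dep ![0,1,1,1] ![0,0,1,1] (by decide)]
    ring
  · rw [dep ![0,0,0,1] ![0,0,1,1] (by decide), dep ![0,1,1,1] ![0,1,0,1] (by decide)]

open Qubits in
/-- For `|φ⟩ = ½(|0011⟩+|0101⟩+|0110⟩+|1010⟩)`: if `a > 1/5` then
`a |φ⟩⟨φ| + (1−a) I/16` is not fully separable (not 4-separable). -/
theorem fourQubit_chi_noise_not_fullySep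
    (φ : (Fin 4 → Fin 2) → ℂ)
    (hφ : φ = fun x => if x = ![0, 0, 1, 1] ∨ x = ![0, 1, 0, 1] ∨
        x = ![0, 1, 1, 0] ∨ x = ![1, 0, 1, 0] then (1 / 2 : ℂ) else 0)
    (a : ℝ) (ha0 : 0 ≤ a) (ha1 : a ≤ 1) (ha : a > 1 / 5) :
    ¬ kSep 4 ((a : ℂ) • outer φ +
        (((1 - a) / 16 : ℝ) : ℂ) • (1 : Matrix (Fin 4 → Fin 2) (Fin 4 → Fin 2) ℂ)) := by
  intro h
  obtain ⟨n, p, ψ, hp, hsum, hnorm, hsep, hρ⟩ := h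
  have entry : ∀ u v : Fin 4 → Fin 2,
      ((a : ℂ) • outer φ + (((1 - a) / 16 : ℝ) : ℂ) •
        (1 : Matrix (Fin 4 → Fin 2) (Fin 4 → Fin 2) ℂ)) u v
      = ∑ s, (p s : ℂ) * (ψ s u * (starRingEnd ℂ) (ψ s v)) := by
    intro u v
    rw [hρ]
    simp [Matrix.sum_apply, outer, Matrix.vecMulVec_apply, mul_assoc]
  have hφx : φ ![0,0,1,1] = 1/2 := by rw [hφ]; exact if_pos (by decide)
  have hφy : φ ![0,1,0,1] = 1/2 := by rw [hφ]; exact if_pos (by decide)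
  have hφz1 : φ ![0,0,0,1] = 0 := by rw [hφ]; exact if_neg (by decide)
  have hφz2 : φ ![0,1,1,1] = 0 := by rw [hφ]; exact if_neg (by decide)
  -- off-diagonal entry
  have e1 : ((a : ℂ) / 4) = ∑ s, (p s : ℂ) *
      (ψ s ![0,0,1,1] * (starRingEnd ℂ) (ψ s ![0,1,0,1])) := by
    have h1 := entry ![0,0,1,1] ![0,1,0,1]
    rw [Matrix.add_apply, Matrix.smul_apply, Matrix.smul_apply,
      Matrix.one_apply_ne (by decide)] at h1
    rw [← h1]
    simp [outer, Matrix.vecMulVec_apply, hφx, hφy]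
    ring
  -- diagonal entries
  have e2 : ∀ z : Fin 4 → Fin 2, φ z = 0 →
      ((1 - a) / 16 : ℝ) = ∑ s, p s * Complex.normSq (ψ s z) := by
    intro z hz
    have h2 := entry z z
    rw [Matrix.add_apply, Matrix.smul_apply, Matrix.smul_apply, Matrix.one_apply_eq] at h2
    have hoz : outer φ z z = 0 := by simp [outer, Matrix.vecMulVec_apply, hz]
    rw [hoz, smul_zero, zero_add] at h2
    have h3 := congrArg Complex.re h2
    simpa [Complex.mul_conj, ← Complex.ofReal_mul, ← Complex.ofReal_sum] using h3
  -- take absolute values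
  have habs : a / 4 ≤ ∑ s, p s *
      (‖ψ s ![0,0,1,1]‖ * ‖ψ s ![0,1,0,1]‖) := by
    have h4 := congrArg (‖·‖) e1
    rw [norm_div] at h4
    simp only [Complex.norm_real, Real.norm_eq_abs, abs_of_nonneg ha0] at h4
    norm_num at h4
    rw [h4]
    refine le_trans (norm_sum_le _ _) ?_
    apply Finset.sum_le_sum
    intro s _
    rw [norm_mul, norm_mul, Complex.norm_real, Real.norm_eq_abs, abs_of_nonneg (hp s), Complex.norm_conj]
  -- swap and AM-GM
  have hswap : ∀ s, ‖ψ s ![0,0,1,1]‖ * ‖ψ s ![0,1,0,1]‖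
      ≤ (Complex.normSq (ψ s ![0,0,0,1]) + Complex.normSq (ψ s ![0,1,1,1])) / 2 := by
    intro s
    have hk := key_swap (ψ s) (hsep s)
    have heq : ‖ψ s ![0,0,1,1]‖ * ‖ψ s ![0,1,0,1]‖
        = ‖ψ s ![0,0,0,1]‖ * ‖ψ s ![0,1,1,1]‖ := by
      rw [← norm_mul, ← norm_mul, hk]
    rw [heq, Complex.normSq_eq_norm_sq, Complex.normSq_eq_norm_sq]
    nlinarith [sq_nonneg (‖ψ s ![0,0,0,1]‖ - ‖ψ s ![0,1,1,1]‖),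
      norm_nonneg (ψ s ![0,0,0,1]), norm_nonneg (ψ s ![0,1,1,1])]
  have final : a / 4 ≤ (1 - a) / 16 := by
    calc a / 4 ≤ ∑ s, p s *
        (‖ψ s ![0,0,1,1]‖ * ‖ψ s ![0,1,0,1]‖) := habs
    _ ≤ ∑ s, p s * ((Complex.normSq (ψ s ![0,0,0,1])
          + Complex.normSq (ψ s ![0,1,1,1])) / 2) := by
        apply Finset.sum_le_sum
        intro s _
        exact mul_le_mul_of_nonneg_left (hswap s) (hp s)
    _ = ((∑ s, p s * Complex.normSq (ψ s ![0,0,0,1]))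
          + (∑ s, p s * Complex.normSq (ψ s ![0,1,1,1]))) / 2 := by
        rw [← Finset.sum_add_distrib, Finset.sum_div]
        apply Finset.sum_congr rfl
        intro s _; ring
    _ = (1 - a) / 16 := by
        rw [← e2 ![0,0,0,1] hφz1, ← e2 ![0,1,1,1] hφz2]; ring
  linarith
end
end
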